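/- Let (A, Con, ⊢, Δ) be an information system with witnesses satisfying condition (BC). Define con = ⋃_i Con(i) and X ⊩ a iff there exists i with X ∈ Con(i) and (i,X) ⊢ a. Then C(A) = (A, con, ⊩) is a continuous information system. -/
import Mathlib


variable {A : Type*}

/-- An information system with witnesses `(A, Con, ⊢, Δ)`. -/
structure IsISW (Δ : A) (Con : A → Finset A → Prop)
    (ent : A → Finset A → A → Prop) : Prop where
  dom : ∀ i X a, ent i X a → Con i X
  ax1 : ∀ i, Con i {i}
  ax2 : ∀ i (X Y : Finset A), Y ⊆ X → Con i X → Con i Y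
  ax3 : ∀ i, ent i ∅ Δ
  ax4 : ∀ i (X Y : Finset A), Con i X → (∀ b ∈ Y, ent i X b) → Con i Y
  ax5 : ∀ i (X Y : Finset A) (a : A), Con i X → Con i Y → X ⊆ Y → ent i X a → ent i Y a
  ax6 : ∀ i (X Y : Finset A) (a : A), Con i X → (∀ b ∈ Y, ent i X b) → ent i Y a → ent i X a
  ax7 : ∀ i j : A, Con j {i} → ∀ X, Con i X → Con j X
  ax8 : ∀ (i j : A) (X : Finset A) (a : A), Con j {i} → Con i X → ent i X a → ent j X a
  ax9 : ∀ (i j : A) (X : Finset A) (a : A), Con j {i} → Con i X → ent j X a → ent i X a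
  ax10 : ∀ i (X Y : Finset A), Con i X → (∀ b ∈ Y, ent i X b) →
      ∃ e Z, Con e Z ∧ ent i X e ∧ (∀ b ∈ Z, ent i X b) ∧ (∀ b ∈ Y, ent e Z b)

/-- A state of an information system with witnesses: finitely consistent with a
witness in the state (ST1), entailment-closed (ST2), every element derivable (ST3). -/
def IsState (Con : A → Finset A → Prop) (ent : A → Finset A → A → Prop)
    (x : Set A) : Prop :=
  (∀ F : Finset A, ↑F ⊆ x → ∃ i ∈ x, Con i F) ∧
  (∀ i ∈ x, ∀ X : Finset A, ↑X ⊆ x → Con i X → ∀ a, ent i X a → a ∈ x) ∧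
  (∀ a ∈ x, ∃ i ∈ x, ∃ X : Finset A, ↑X ⊆ x ∧ Con i X ∧ ent i X a)

/-- A continuous information system (Hoofman). -/
structure IsCIS (con : Finset A → Prop) (entC : Finset A → A → Prop) : Prop where
  dom : ∀ X a, entC X a → con X
  ax1 : con ∅
  ax2 : ∀ X Y : Finset A, Y ⊆ X → con X → con Y
  ax3 : ∀ a : A, con {a}
  ax4 : ∀ (X Y : Finset A), con X → (∀ b ∈ Y, entC X b) → con Y
  ax5 : ∀ (X Y : Finset A) (a : A), con X → con Y → X ⊆ Y → entC X a → entC Y a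
  ax6 : ∀ (X : Finset A) (a : A), con X →
    ((∃ Z : Finset A, con Z ∧ (∀ b ∈ Z, entC X b) ∧ entC Z a) ↔ entC X a)

theorem stmt18 {Δ : A} {Con : A → Finset A → Prop} {ent : A → Finset A → A → Prop}
    (h : IsISW Δ Con ent)
    (hBC : ∀ (i j : A) (X : Finset A), Con i X → Con j X →
      ∀ a, ent i X a ↔ ent j X a) :
    IsCIS (fun X : Finset A => ∃ i, Con i X)
      (fun (X : Finset A) (a : A) => ∃ i, Con i X ∧ ent i X a) := by
  constructor
  · rintro X a ⟨i, hX, _⟩; exact ⟨i, hX⟩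
  · exact ⟨Δ, h.ax2 Δ {Δ} ∅ (Finset.empty_subset _) (h.ax1 Δ)⟩
  · rintro X Y hYX ⟨i, hX⟩; exact ⟨i, h.ax2 i X Y hYX hX⟩
  · intro a; exact ⟨a, h.ax1 a⟩
  · rintro X Y ⟨i, hX⟩ hY
    refine ⟨i, h.ax4 i X Y hX ?_⟩
    intro b hb
    obtain ⟨j, hjX, hjb⟩ := hY b hb
    exact (hBC j i X hjX hX b).mp hjb
  · rintro X Y a ⟨i, hX⟩ ⟨j, hY⟩ hXY ⟨k, hkX, hka⟩
    have hjX : Con j X := h.ax2 j Y X hXY hY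
    exact ⟨j, hY, h.ax5 j X Y a hjX hY hXY ((hBC k j X hkX hjX a).mp hka)⟩
  · rintro X a ⟨i, hX⟩
    constructor
    · rintro ⟨Z, ⟨e, hZ⟩, hXZ, ⟨k, hkZ, hka⟩⟩
      have hiXZ : ∀ b ∈ Z, ent i X b := by
        intro b hb
        obtain ⟨j, hjX, hjb⟩ := hXZ b hb
        exact (hBC j i X hjX hX b).mp hjb
      have hiZ : Con i Z := h.ax4 i X Z hX hiXZ
      exact ⟨i, hX, h.ax6 i X Z a hX hiXZ ((hBC k i Z hkZ hiZ a).mp hka)⟩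
    · rintro ⟨k, hkX, hka⟩
      have hia : ent i X a := (hBC k i X hkX hX a).mp hka
      obtain ⟨e, Z, heZ, hXe, hXZ, hZa⟩ := h.ax10 i X {a} hX (by simpa using hia)
      exact ⟨Z, ⟨e, heZ⟩, fun b hb => ⟨i, hX, hXZ b hb⟩, ⟨e, heZ, hZa a (by simp)⟩⟩
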